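/- Let F = ℝ (or any archimedean local field), let V be a finite-dimensional real vector space with dim V = d ≥ 2 even, and let f be a Schwartz function on V ⊕ F². For ξ ∈ V with ξ ≠ 0, the integral ∫_{F× × K} |f(a⁻¹ξ, 0, a)| · |a|^{2 − d/2} d×a dk over F× × K (K the maximal compact of SL₂(F), f replaced by a K-average of Schwartz functions) converges absolutely whenever d > 4, and for every A ≥ 0 it is bounded by a constant (depending on f) times max(|ξ|,1)^{−A} · min(|ξ|,1)^{2 − d/2}. -/

import Mathlib

open MeasureTheory Set Real

lemma stmt4_aux {m κ r c₁ c₂ : ℝ} (hm : 1 ≤ m) (hκ : m + 1 < κ)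
    (hr : 0 < r) (hc₁ : 0 ≤ c₁) (hc₂ : 0 ≤ c₂)
    {g : ℝ → ℝ} (hgm : AEStronglyMeasurable g volume) (hg0 : ∀ a, 0 ≤ g a)
    (h1 : ∀ a : ℝ, |a| ≤ min r 1 → g a ≤ c₁ * |a| ^ (κ - m - 1))
    (h2 : ∀ a : ℝ, min r 1 ≤ |a| → g a ≤ c₂ * |a| ^ (-m - 1)) :
    Integrable g ∧
      ∫ a, g a ≤ 2 * c₁ * (min r 1) ^ (κ - m) + 2 * c₂ * (min r 1) ^ (-m) := by
  set s : ℝ := min r 1 with hs_def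
  have hs : 0 < s := lt_min hr one_pos
  have hp : (0:ℝ) < κ - m - 1 := by linarith
  have hS₁ : MeasurableSet (Icc (-s) s) := measurableSet_Icc
  have hS₂ : MeasurableSet (Iio (-s) ∪ Ioi s) := measurableSet_Iio.union measurableSet_Ioi
  have hF₁0 : ∀ a : ℝ, 0 ≤ c₁ * |a| ^ (κ - m - 1) :=
    fun a => mul_nonneg hc₁ (rpow_nonneg (abs_nonneg a) _)
  have hF₂0 : ∀ a : ℝ, 0 ≤ c₂ * |a| ^ (-m - 1) :=
    fun a => mul_nonneg hc₂ (rpow_nonneg (abs_nonneg a) _)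
  -- integrability on the pieces
  have hI₁ : IntegrableOn (fun a : ℝ => c₁ * |a| ^ (κ - m - 1)) (Icc (-s) s) := by
    apply Continuous.integrableOn_Icc
    exact continuous_const.mul (continuous_abs.rpow_const fun a => Or.inr hp.le)
  have hIoi : IntegrableOn (fun a : ℝ => c₂ * |a| ^ (-m - 1)) (Ioi s) := by
    have h : IntegrableOn (fun a : ℝ => c₂ * a ^ (-m - 1)) (Ioi s) :=
      (integrableOn_Ioi_rpow_of_lt (a := -m - 1) (by linarith) hs).const_mul c₂
    apply h.congr_fun ?_ measurableSet_Ioi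
    intro x hx
    simp only []
    rw [abs_of_pos (hs.trans hx)]
  have hIio : IntegrableOn (fun a : ℝ => c₂ * |a| ^ (-m - 1)) (Iio (-s)) := by
    rw [← (Measure.measurePreserving_neg (volume : Measure ℝ)).integrableOn_comp_preimage
        (Homeomorph.neg ℝ).measurableEmbedding]
    simpa [Function.comp_def, neg_preimage, neg_Iio, abs_neg] using hIoi
  have hI₂ : IntegrableOn (fun a : ℝ => c₂ * |a| ^ (-m - 1)) (Iio (-s) ∪ Ioi s) :=
    hIio.union hIoi
  -- the majorant
  set H : ℝ → ℝ := fun a =>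
    (Icc (-s) s).indicator (fun a => c₁ * |a| ^ (κ - m - 1)) a +
      (Iio (-s) ∪ Ioi s).indicator (fun a => c₂ * |a| ^ (-m - 1)) a with hH_def
  have hHint : Integrable H :=
    (hI₁.integrable_indicator hS₁).add (hI₂.integrable_indicator hS₂)
  have hgH : ∀ a, g a ≤ H a := by
    intro a
    by_cases h : |a| ≤ s
    · have ha1 : a ∈ Icc (-s) s := abs_le.mp h
      have ha2 : a ∉ Iio (-s) ∪ Ioi s := by
        rintro (h2' | h2')
        · rw [mem_Iio] at h2'; rw [abs_le] at h; linarith [h.1]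
        · rw [mem_Ioi] at h2'; rw [abs_le] at h; linarith [h.2]
      rw [hH_def]
      simp only [indicator_of_mem ha1, indicator_of_notMem ha2, add_zero]
      exact h1 a h
    · push_neg at h
      have ha1 : a ∉ Icc (-s) s := by
        intro hmem
        exact absurd (abs_le.mpr hmem) (not_le.mpr h)
      have ha2 : a ∈ Iio (-s) ∪ Ioi s := by
        rcases lt_or_ge a 0 with h' | h'
        · left; rw [mem_Iio]; rw [abs_of_neg h'] at h; linarith
        · right; rw [mem_Ioi]; rwa [abs_of_nonneg h'] at h
      rw [hH_def]
      simp only [indicator_of_mem ha2, indicator_of_notMem ha1, zero_add]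
      exact h2 a h.le
  have hgint : Integrable g := by
    apply hHint.mono' hgm
    filter_upwards with a
    rw [Real.norm_eq_abs, abs_of_nonneg (hg0 a)]
    exact hgH a
  refine ⟨hgint, ?_⟩
  have step1 : ∫ a, g a ≤ ∫ a, H a := integral_mono hgint hHint hgH
  have hsplit : ∫ a, H a =
      (∫ a in Icc (-s) s, c₁ * |a| ^ (κ - m - 1)) +
        ∫ a in Iio (-s) ∪ Ioi s, c₂ * |a| ^ (-m - 1) := by
    rw [hH_def, integral_add (hI₁.integrable_indicator hS₁) (hI₂.integrable_indicator hS₂),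
      integral_indicator hS₁, integral_indicator hS₂]
  -- first piece
  have hb1 : (∫ a in Icc (-s) s, c₁ * |a| ^ (κ - m - 1)) ≤ 2 * c₁ * s ^ (κ - m) := by
    have hconst : IntegrableOn (fun _ : ℝ => c₁ * s ^ (κ - m - 1)) (Icc (-s) s) :=
      integrableOn_const measure_Icc_lt_top.ne
    have hmono := setIntegral_mono_on hI₁ hconst hS₁ (fun x hx => by
      have hxs : |x| ≤ s := abs_le.mpr hx
      exact mul_le_mul_of_nonneg_left (rpow_le_rpow (abs_nonneg x) hxs hp.le) hc₁)
    refine hmono.trans ?_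
    rw [setIntegral_const, Real.volume_real_Icc, smul_eq_mul,
      max_eq_left (by linarith : (0:ℝ) ≤ s - -s)]
    have : s ^ (κ - m) = s ^ (κ - m - 1) * s := by
      rw [← rpow_add_one hs.ne' (κ - m - 1)]; ring_nf
    rw [this]; ring_nf; nlinarith [rpow_nonneg hs.le (κ - m - 1), hs]
  -- second piece
  have hIioIoi : (∫ a in Iio (-s), c₂ * |a| ^ (-m - 1)) = ∫ a in Ioi s, c₂ * |a| ^ (-m - 1) := by
    rw [← (Measure.measurePreserving_neg (volume : Measure ℝ)).setIntegral_preimage_emb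
        (Homeomorph.neg ℝ).measurableEmbedding (fun a => c₂ * |a| ^ (-m - 1)) (Iio (-s))]
    simp [neg_preimage, neg_Iio, abs_neg]
  have hIoival : (∫ a in Ioi s, c₂ * |a| ^ (-m - 1)) = c₂ * (s ^ (-m) / m) := by
    rw [setIntegral_congr_fun measurableSet_Ioi
        (fun x (hx : x ∈ Ioi s) => by rw [abs_of_pos (hs.trans hx)]),
      integral_const_mul, integral_Ioi_rpow_of_lt (by linarith) hs]
    congr 1
    rw [show -m - 1 + 1 = -m by ring]
    rw [neg_div, div_neg, neg_neg]
  have hb2 : (∫ a in Iio (-s) ∪ Ioi s, c₂ * |a| ^ (-m - 1)) ≤ 2 * c₂ * s ^ (-m) := by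
    rw [setIntegral_union (by
        apply Set.disjoint_left.mpr
        intro x hx1 hx2
        rw [mem_Iio] at hx1; rw [mem_Ioi] at hx2; linarith) measurableSet_Ioi hIio hIoi,
      hIioIoi, hIoival]
    have hdiv : c₂ * (s ^ (-m) / m) ≤ c₂ * s ^ (-m) := by
      apply mul_le_mul_of_nonneg_left _ hc₂
      exact div_le_self (rpow_nonneg hs.le _) hm
    linarith
  calc ∫ a, g a ≤ ∫ a, H a := step1
    _ = _ + _ := hsplit
    _ ≤ 2 * c₁ * s ^ (κ - m) + 2 * c₂ * s ^ (-m) := add_le_add hb1 hb2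

/-- Let `F = ℝ`, let `V` be a finite-dimensional real vector space of even
dimension `d > 4`, and let `f` be a Schwartz function on `V ⊕ F²`.  For `ξ ∈ V`, `ξ ≠ 0`, the
integral `∫_{F× × K} |f(a⁻¹ξ, 0, a)| |a|^{2−d/2} d×a dk` (with `d×a = |a|⁻¹ da` and `K` a
compact group with probability Haar measure) converges absolutely, and for every `A ≥ 0` it is
bounded by a constant depending on `f` (and `A`) times
`max(|ξ|,1)^{−A} · min(|ξ|,1)^{2−d/2}`. -/
theorem stmt4
    {V : Type*} [NormedAddCommGroup V] [NormedSpace ℝ V] [FiniteDimensional ℝ V]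
    (d : ℕ) (hd : Even d) (hdim : Module.finrank ℝ V = d) (h4 : 4 < d)
    {K : Type*} [MeasurableSpace K] (ν : Measure K) [IsProbabilityMeasure ν]
    (f : SchwartzMap (V × ℝ × ℝ) ℂ) (ξ : V) (hξ : ξ ≠ 0) :
    IntegrableOn
      (fun q : ℝ × K => ‖f (q.1⁻¹ • ξ, 0, q.1)‖ * |q.1| ^ ((2:ℝ) - (d:ℝ)/2) * |q.1|⁻¹)
      (({0}ᶜ : Set ℝ) ×ˢ (Set.univ : Set K)) (volume.prod ν)
    ∧ ∀ A : ℝ, 0 ≤ A → ∃ C : ℝ,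
      (∫ q in (({0}ᶜ : Set ℝ) ×ˢ (Set.univ : Set K)),
          ‖f (q.1⁻¹ • ξ, 0, q.1)‖ * |q.1| ^ ((2:ℝ) - (d:ℝ)/2) * |q.1|⁻¹ ∂(volume.prod ν))
        ≤ C * max ‖ξ‖ 1 ^ (-A) * min ‖ξ‖ 1 ^ ((2:ℝ) - (d:ℝ)/2) := by
  have hr : (0:ℝ) < ‖ξ‖ := norm_pos_iff.mpr hξ
  set r : ℝ := ‖ξ‖ with hr_def
  have hd6 : 6 ≤ d := by
    rcases hd with ⟨c, hc⟩; omega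
  have hdR : (6:ℝ) ≤ (d:ℝ) := by exact_mod_cast hd6
  set m : ℝ := (d:ℝ)/2 - 2 with hm_def
  have hm : 1 ≤ m := by rw [hm_def]; linarith
  have hexp : (2:ℝ) - (d:ℝ)/2 = -m := by rw [hm_def]; ring
  set g : ℝ → ℝ :=
    fun a => ‖f (a⁻¹ • ξ, 0, a)‖ * |a| ^ ((2:ℝ) - (d:ℝ)/2) * |a|⁻¹ with hg_def
  -- measurability
  have hgm : AEStronglyMeasurable g volume := by
    have hcont : ContinuousOn g ({0}ᶜ : Set ℝ) := by
      apply ContinuousOn.mul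
      apply ContinuousOn.mul
      · apply ContinuousOn.norm
        apply f.continuous.comp_continuousOn
        exact (continuousOn_inv₀.smul continuousOn_const).prodMk
          (continuousOn_const.prodMk continuousOn_id)
      · exact continuous_abs.continuousOn.rpow_const
          fun x hx => Or.inl (abs_ne_zero.mpr hx)
      · exact continuous_abs.continuousOn.inv₀ fun x hx => abs_ne_zero.mpr hx
    have h' : AEStronglyMeasurable g ((volume : Measure ℝ).restrict ({0}ᶜ)) :=
      hcont.aestronglyMeasurable (measurableSet_singleton (0:ℝ)).compl
    rwa [restrict_compl_singleton] at h'
  -- nonnegativity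
  have hgnn : ∀ a, 0 ≤ g a := by
    intro a
    rw [hg_def]
    have h1 : (0:ℝ) ≤ |a| ^ ((2:ℝ) - (d:ℝ)/2) := rpow_nonneg (abs_nonneg a) _
    have h2 : (0:ℝ) ≤ |a|⁻¹ := inv_nonneg.mpr (abs_nonneg a)
    positivity
  -- value of g away from zero
  have hga : ∀ a : ℝ, a ≠ 0 → g a = ‖f (a⁻¹ • ξ, 0, a)‖ * |a| ^ (-m - 1) := by
    intro a ha
    have h0 : (0:ℝ) < |a| := abs_pos.mpr ha
    rw [hg_def]
    simp only []
    rw [hexp, mul_assoc]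
    congr 1
    rw [← Real.rpow_neg_one |a|, ← rpow_add h0]
    ring_nf
  -- norm of the point
  have hnorm : ∀ a : ℝ, ‖((a⁻¹ • ξ : V), ((0:ℝ), a))‖ = max (|a|⁻¹ * r) |a| := by
    intro a
    rw [Prod.norm_def, Prod.norm_def, norm_smul]
    simp only [norm_inv, Real.norm_eq_abs, norm_zero]
    rw [max_eq_right (abs_nonneg a)]
  -- main uniform claim
  have main : ∀ A : ℝ, 0 ≤ A → ∃ C : ℝ, Integrable g volume ∧
      ∫ a, g a ≤ C * max r 1 ^ (-A) * min r 1 ^ ((2:ℝ) - (d:ℝ)/2) := by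
    intro A hA
    set k : ℕ := ⌈2*A + m + 2⌉₊ with hk_def
    have hκge : 2*A + m + 2 ≤ (k:ℝ) := Nat.le_ceil _
    set κ : ℝ := (k:ℝ) with hκ_def
    have hκm : m + 1 < κ := by linarith
    have hκA : A ≤ κ := by linarith
    have hκA2 : A ≤ κ/2 := by linarith
    have hκ0 : (0:ℝ) ≤ κ := by linarith
    obtain ⟨Ck, hCkpos, hCk⟩ := f.decay k 0
    simp only [norm_iteratedFDeriv_zero] at hCk
    set C₀ : ℝ := SchwartzMap.seminorm ℝ 0 0 f with hC₀_def
    have hC₀ : ∀ x, ‖f x‖ ≤ C₀ := fun x => f.norm_le_seminorm ℝ x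
    set D : ℝ := max C₀ Ck with hD_def
    have hD0 : (0:ℝ) ≤ D := le_max_of_le_right hCkpos.le
    set M : ℝ := max r 1 with hM_def
    have hM1 : (1:ℝ) ≤ M := le_max_right _ _
    set c₁ : ℝ := Ck * r ^ (-κ) with hc₁_def
    set c₂ : ℝ := D * M ^ (-(κ/2)) with hc₂_def
    have hc₁0 : 0 ≤ c₁ := mul_nonneg hCkpos.le (rpow_nonneg hr.le _)
    have hc₂0 : 0 ≤ c₂ := mul_nonneg hD0 (rpow_nonneg (by linarith : (0:ℝ) ≤ M) _)
    -- bound 1 : small |a|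
    have h1 : ∀ a : ℝ, |a| ≤ min r 1 → g a ≤ c₁ * |a| ^ (κ - m - 1) := by
      intro a ha
      by_cases ha0 : a = 0
      · subst ha0
        have : g 0 = 0 := by rw [hg_def]; simp
        rw [this]
        exact mul_nonneg hc₁0 (rpow_nonneg (abs_nonneg _) _)
      · have h0 : (0:ℝ) < |a| := abs_pos.mpr ha0
        have hfkey : (|a|⁻¹ * r) ^ k * ‖f (a⁻¹ • ξ, 0, a)‖ ≤ Ck := by
          refine le_trans ?_ (hCk (a⁻¹ • ξ, 0, a))
          apply mul_le_mul_of_nonneg_right _ (norm_nonneg _)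
          apply pow_le_pow_left₀ (by positivity)
          rw [hnorm a]
          exact le_max_left _ _
        have hbase : (0:ℝ) < (|a|⁻¹ * r) ^ k := by positivity
        have hfp : ‖f (a⁻¹ • ξ, 0, a)‖ ≤ Ck * ((|a|⁻¹ * r) ^ k)⁻¹ := by
          rw [← le_div_iff₀' hbase, div_eq_mul_inv] at hfkey
          exact hfkey
        have hinvpow : ((|a|⁻¹ * r) ^ k)⁻¹ = (|a| * r⁻¹) ^ k := by
          rw [← inv_pow, mul_inv, inv_inv]
        rw [hinvpow] at hfp
        rw [hga a ha0]
        calc ‖f (a⁻¹ • ξ, 0, a)‖ * |a| ^ (-m - 1)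
            ≤ (Ck * (|a| * r⁻¹) ^ k) * |a| ^ (-m - 1) :=
              mul_le_mul_of_nonneg_right hfp (rpow_nonneg (abs_nonneg a) _)
          _ = c₁ * |a| ^ (κ - m - 1) := by
              have hid : (|a| * r⁻¹) ^ k = |a| ^ κ * r ^ (-κ) := by
                rw [hκ_def, mul_pow, ← rpow_natCast |a| k, ← rpow_natCast r⁻¹ k,
                  inv_rpow hr.le, ← rpow_neg hr.le]
              rw [hid, hc₁_def,
                show Ck * (|a| ^ κ * r ^ (-κ)) * |a| ^ (-m - 1)
                  = Ck * r ^ (-κ) * (|a| ^ κ * |a| ^ (-m - 1)) by ring,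
                ← rpow_add h0, show κ + (-m - 1) = κ - m - 1 by ring]
    -- bound 2 : large |a|
    have h2 : ∀ a : ℝ, min r 1 ≤ |a| → g a ≤ c₂ * |a| ^ (-m - 1) := by
      intro a ha
      have hmin : (0:ℝ) < min r 1 := lt_min hr one_pos
      have ha0 : a ≠ 0 := by
        intro h; rw [h, abs_zero] at ha; linarith
      have hfp : ‖f (a⁻¹ • ξ, 0, a)‖ ≤ D * M ^ (-(κ/2)) := by
        rcases le_or_gt r 1 with hr1 | hr1
        · have : M = 1 := by rw [hM_def, max_eq_right hr1]
          rw [this, one_rpow, mul_one]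
          exact (hC₀ _).trans (le_max_left _ _)
        · have hMr : M = r := by rw [hM_def, max_eq_left hr1.le]
          have hroot : Real.sqrt r ≤ ‖((a⁻¹ • ξ : V), ((0:ℝ), a))‖ := by
            have hmem := hnorm a
            have hle1 : |a|⁻¹ * r ≤ ‖((a⁻¹ • ξ : V), ((0:ℝ), a))‖ := by
              rw [hmem]; exact le_max_left _ _
            have hle2 : |a| ≤ ‖((a⁻¹ • ξ : V), ((0:ℝ), a))‖ := by
              rw [hmem]; exact le_max_right _ _
            have h0 : (0:ℝ) < |a| := abs_pos.mpr ha0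
            have hrle : r ≤ ‖((a⁻¹ • ξ : V), ((0:ℝ), a))‖ * ‖((a⁻¹ • ξ : V), ((0:ℝ), a))‖ := by
              calc r = (|a|⁻¹ * r) * |a| := by
                    rw [mul_comm, ← mul_assoc, mul_inv_cancel₀ (abs_ne_zero.mpr ha0), one_mul]
                _ ≤ _ := mul_le_mul hle1 hle2 (abs_nonneg a) (norm_nonneg _)
            calc Real.sqrt r ≤ Real.sqrt (‖((a⁻¹ • ξ : V), ((0:ℝ), a))‖ * ‖((a⁻¹ • ξ : V), ((0:ℝ), a))‖) :=
                  Real.sqrt_le_sqrt hrle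
              _ = ‖((a⁻¹ • ξ : V), ((0:ℝ), a))‖ := Real.sqrt_mul_self (norm_nonneg _)
          have hkey : r ^ (κ/2) * ‖f (a⁻¹ • ξ, 0, a)‖ ≤ Ck := by
            refine le_trans ?_ (hCk (a⁻¹ • ξ, 0, a))
            apply mul_le_mul_of_nonneg_right _ (norm_nonneg _)
            rw [← rpow_natCast (‖((a⁻¹ • ξ : V), ((0:ℝ), a))‖) k]
            calc r ^ (κ/2) = (r ^ ((1:ℝ)/2)) ^ (κ:ℝ) := by
                  rw [← rpow_mul hr.le]; ring_nf
              _ = (Real.sqrt r) ^ (κ:ℝ) := by rw [Real.sqrt_eq_rpow]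
              _ ≤ _ := rpow_le_rpow (Real.sqrt_nonneg r) hroot hκ0
          have hbase : (0:ℝ) < r ^ (κ/2) := rpow_pos_of_pos hr _
          have : ‖f (a⁻¹ • ξ, 0, a)‖ ≤ Ck * (r ^ (κ/2))⁻¹ := by
            rw [← le_div_iff₀' hbase, div_eq_mul_inv] at hkey
            exact hkey
          refine this.trans ?_
          rw [hMr, ← rpow_neg hr.le]
          exact mul_le_mul_of_nonneg_right (le_max_right _ _) (rpow_nonneg hr.le _)
      rw [hga a ha0]
      exact mul_le_mul_of_nonneg_right hfp (rpow_nonneg (abs_nonneg a) _)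
    -- apply the auxiliary lemma
    obtain ⟨hint, hbound⟩ := stmt4_aux hm hκm hr hc₁0 hc₂0 hgm hgnn h1 h2
    refine ⟨2*Ck + 2*D, hint, ?_⟩
    set s : ℝ := min r 1 with hs_def
    have hs : 0 < s := lt_min hr one_pos
    -- final estimate
    have e1 : 2 * c₁ * s ^ (κ - m) ≤ 2*Ck * (M ^ (-A) * s ^ (-m)) := by
      have hsk : s ^ (κ - m) = s ^ κ * s ^ (-m) := by
        rw [← rpow_add hs, sub_eq_add_neg]
      rw [hsk, hc₁_def]
      have key : r ^ (-κ) * s ^ κ ≤ M ^ (-A) := by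
        rcases le_or_gt r 1 with hr1 | hr1
        · have hsr : s = r := by rw [hs_def, min_eq_left hr1]
          have hMr : M = 1 := by rw [hM_def, max_eq_right hr1]
          rw [hsr, hMr, one_rpow, ← rpow_add hr, neg_add_cancel, rpow_zero]
        · have hsr : s = 1 := by rw [hs_def, min_eq_right hr1.le]
          have hMr : M = r := by rw [hM_def, max_eq_left hr1.le]
          rw [hsr, hMr, one_rpow, mul_one]
          exact rpow_le_rpow_of_exponent_le hr1.le (by linarith)
      calc 2 * (Ck * r ^ (-κ)) * (s ^ κ * s ^ (-m))
          = (2 * Ck) * ((r ^ (-κ) * s ^ κ) * s ^ (-m)) := by ring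
        _ ≤ (2 * Ck) * (M ^ (-A) * s ^ (-m)) := by
            apply mul_le_mul_of_nonneg_left _ (by linarith)
            exact mul_le_mul_of_nonneg_right key (rpow_nonneg hs.le _)
        _ = 2*Ck * (M ^ (-A) * s ^ (-m)) := by ring
    have e2 : 2 * c₂ * s ^ (-m) ≤ 2*D * (M ^ (-A) * s ^ (-m)) := by
      rw [hc₂_def]
      have key : M ^ (-(κ/2)) ≤ M ^ (-A) :=
        rpow_le_rpow_of_exponent_le hM1 (by linarith)
      calc 2 * (D * M ^ (-(κ/2))) * s ^ (-m)
          = (2 * D) * (M ^ (-(κ/2)) * s ^ (-m)) := by ring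
        _ ≤ (2 * D) * (M ^ (-A) * s ^ (-m)) := by
            apply mul_le_mul_of_nonneg_left _ (by linarith)
            exact mul_le_mul_of_nonneg_right key (rpow_nonneg hs.le _)
        _ = 2*D * (M ^ (-A) * s ^ (-m)) := by ring
    calc ∫ a, g a ≤ 2 * c₁ * s ^ (κ - m) + 2 * c₂ * s ^ (-m) := hbound
      _ ≤ 2*Ck * (M ^ (-A) * s ^ (-m)) + 2*D * (M ^ (-A) * s ^ (-m)) := add_le_add e1 e2
      _ = (2*Ck + 2*D) * M ^ (-A) * s ^ (-m) := by ring
      _ = (2*Ck + 2*D) * max r 1 ^ (-A) * min r 1 ^ ((2:ℝ) - (d:ℝ)/2) := by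
          rw [hexp, hM_def, hs_def]
  -- transfer to the product measure
  have hres : (volume.prod ν).restrict (({0}ᶜ : Set ℝ) ×ˢ (Set.univ : Set K))
      = volume.prod ν := by
    rw [← Measure.prod_restrict, Measure.restrict_univ, restrict_compl_singleton]
  have hmap : Measure.map Prod.fst (volume.prod ν) = (volume : Measure ℝ) := by
    rw [Measure.map_fst_prod, measure_univ, one_smul]
  obtain ⟨C0, hint0, _⟩ := main 0 le_rfl
  have hintprod : Integrable (fun q : ℝ × K => g q.1) (volume.prod ν) := by
    have h1 : AEStronglyMeasurable g (Measure.map Prod.fst (volume.prod ν)) := by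
      rw [hmap]; exact hgm
    have h2 : Integrable g (Measure.map Prod.fst (volume.prod ν)) := by
      rw [hmap]; exact hint0
    exact (integrable_map_measure h1 measurable_fst.aemeasurable).mp h2
  constructor
  · rw [IntegrableOn, hres]
    exact hintprod
  · intro A hA
    obtain ⟨C, hint, hb⟩ := main A hA
    refine ⟨C, ?_⟩
    have heq : (∫ q in (({0}ᶜ : Set ℝ) ×ˢ (Set.univ : Set K)),
        ‖f (q.1⁻¹ • ξ, 0, q.1)‖ * |q.1| ^ ((2:ℝ) - (d:ℝ)/2) * |q.1|⁻¹ ∂(volume.prod ν))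
        = ∫ a, g a := by
      rw [hres]
      have h1 : AEStronglyMeasurable g (Measure.map Prod.fst (volume.prod ν)) := by
        rw [hmap]; exact hgm
      have := integral_map (measurable_fst.aemeasurable (μ := volume.prod ν)) h1
      rw [hmap] at this
      exact this.symm
    rw [heq]
    exact hb
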